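/- There exist constants c₁ > 0, c₂ > 0 and an integer n₀ such that for every n ≥ n₀ and every tree representation v on {1,…,n}, the number of distinct tree representations obtainable from v by a single HOP (the HOP neighbourhood of v) satisfies c₁·n² ≤ |N(v)| ≤ c₂·n². -/

import Mathlib

/-- 0-indexed position of the first occurrence of `x` in `v`. -/
def firstOcc (v : List ℕ) (x : ℕ) : ℕ := v.idxOf x

/-- 0-indexed position of the second (= last, when `x` occurs exactly twice)
occurrence of `x` in `v`. -/
def secondOcc (v : List ℕ) (x : ℕ) : ℕ := v.length - 1 - v.reverse.idxOf x

/-- `v` is a tree representation on `{1,…,n}`: it has length `2n`, entries in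
`{1,…,n}`, every `i ∈ {1,…,n}` occurs exactly twice, the first entry is `1`,
for every `i ∈ {2,…,n}` the first occurrence of `i` appears strictly before the
second occurrence of `i-1`, and the second occurrence of `i` appears strictly
after the second occurrence of `i-1`. -/
def IsTreeRep (n : ℕ) (v : List ℕ) : Prop :=
  v.length = 2 * n ∧
  (∀ x ∈ v, 1 ≤ x ∧ x ≤ n) ∧
  (∀ i, 1 ≤ i → i ≤ n → v.count i = 2) ∧
  v.getD 0 0 = 1 ∧
  (∀ i, 2 ≤ i → i ≤ n → firstOcc v i < secondOcc v (i - 1)) ∧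
  (∀ i, 2 ≤ i → i ≤ n → secondOcc v (i - 1) < secondOcc v i)

/-- A single HOP: for some `i ∈ {2,…,n}`, remove the first occurrence of `i`
from `v` and reinsert it at a (0-indexed) position `k` strictly after the first
entry (`1 ≤ k`) and weakly before the (resulting position of the) second
occurrence of `i-1`. -/
def IsHop (n : ℕ) (v v' : List ℕ) : Prop :=
  ∃ i k, 2 ≤ i ∧ i ≤ n ∧ 1 ≤ k ∧ k ≤ secondOcc (v.erase i) (i - 1) ∧
    v' = (v.erase i).insertIdx k i

lemma indexOf_le_of_getElem {l : List ℕ} {t x : ℕ} (ht : t < l.length) (h : l[t] = x) :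
    l.idxOf x ≤ t := by
  induction l generalizing t with
  | nil => simp at ht
  | cons a l ih =>
    rcases t with _ | t
    · simp at h; simp [h, List.idxOf_cons_self]
    · by_cases hax : a = x
      · simp [List.idxOf_cons_eq _ hax]
      · rw [List.idxOf_cons_ne _ hax]
        have := ih (t := t) (by simpa using ht) (by simpa using h)
        omega

lemma firstOcc_lt_length {l : List ℕ} {x : ℕ} (h : x ∈ l) : firstOcc l x < l.length :=
  List.idxOf_lt_length_iff.2 h

lemma getElem_firstOcc {l : List ℕ} {x : ℕ} (h : x ∈ l) :
    l[firstOcc l x]'(firstOcc_lt_length h) = x :=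
  List.getElem_idxOf _

lemma secondOcc_lt_length {l : List ℕ} {x : ℕ} (h : x ∈ l) : secondOcc l x < l.length := by
  have h0 : 0 < l.length := List.length_pos_iff.2 (List.ne_nil_of_mem h)
  unfold secondOcc; omega

lemma getElem_secondOcc {l : List ℕ} {x : ℕ} (h : x ∈ l) :
    l[secondOcc l x]'(secondOcc_lt_length h) = x := by
  have hr : x ∈ l.reverse := by simpa using h
  have hlt : l.reverse.idxOf x < l.reverse.length := List.idxOf_lt_length_iff.2 hr
  have hg : l.reverse[l.reverse.idxOf x]'hlt = x := List.getElem_idxOf _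
  rw [List.getElem_reverse] at hg
  simpa [secondOcc] using hg

lemma le_secondOcc {l : List ℕ} {t x : ℕ} (ht : t < l.length) (h : l[t] = x) :
    t ≤ secondOcc l x := by
  have h1 : l.length - 1 - t < l.reverse.length := by simp; omega
  have h2 : l.reverse[l.length - 1 - t]'h1 = x := by
    rw [List.getElem_reverse]
    have : l.length - 1 - (l.length - 1 - t) = t := by omega
    simp_rw [this]; exact h
  have := indexOf_le_of_getElem h1 h2
  unfold secondOcc; omega

lemma mem_take_of_firstOcc_lt {l : List ℕ} {x m : ℕ} (hx : x ∈ l) (h : firstOcc l x < m) :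
    x ∈ l.take m := by
  have h1 : firstOcc l x < (l.take m).length := by
    simp [List.length_take]; exact ⟨h, firstOcc_lt_length hx⟩
  have : (l.take m)[firstOcc l x]'h1 = x := by
    rw [List.getElem_take]; exact getElem_firstOcc hx
  exact this ▸ List.getElem_mem h1

lemma firstOcc_lt_of_mem_take {l : List ℕ} {x m : ℕ} (h : x ∈ l.take m) : firstOcc l x < m := by
  obtain ⟨t, ht, hg⟩ := List.mem_iff_getElem.1 h
  have htl : t < l.length := by simp [List.length_take] at ht; omega
  have : l[t]'htl = x := by rw [List.getElem_take] at hg; exact hg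
  have := indexOf_le_of_getElem htl this
  have : firstOcc l x ≤ t := this
  simp [List.length_take] at ht; omega

lemma mem_drop_of_le_secondOcc {l : List ℕ} {x m : ℕ} (hx : x ∈ l) (h : m ≤ secondOcc l x) :
    x ∈ l.drop m := by
  have hs := secondOcc_lt_length hx
  have h1 : secondOcc l x - m < (l.drop m).length := by simp [List.length_drop]; omega
  have : (l.drop m)[secondOcc l x - m]'h1 = x := by
    rw [List.getElem_drop]
    have : m + (secondOcc l x - m) = secondOcc l x := by omega
    simp_rw [this]; exact getElem_secondOcc hx
  exact this ▸ List.getElem_mem h1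

lemma le_secondOcc_of_mem_drop {l : List ℕ} {x m : ℕ} (h : x ∈ l.drop m) :
    m ≤ secondOcc l x := by
  obtain ⟨t, ht, hg⟩ := List.mem_iff_getElem.1 h
  have htl : m + t < l.length := by simp [List.length_drop] at ht; omega
  have : l[m + t]'htl = x := by rw [List.getElem_drop] at hg; exact hg
  have := le_secondOcc htl this
  omega

lemma firstOcc_sandwich_left {P Q : List ℕ} {c x : ℕ} (h : x ∈ P) :
    firstOcc (P ++ c :: Q) x = firstOcc (P ++ Q) x := by
  unfold firstOcc
  rw [List.idxOf_append_of_mem h, List.idxOf_append_of_mem h]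

lemma firstOcc_sandwich_self {P Q : List ℕ} {c : ℕ} (h : c ∉ P) :
    firstOcc (P ++ c :: Q) c = P.length := by
  unfold firstOcc
  rw [List.idxOf_append_of_notMem h, List.idxOf_cons_self]
  omega

lemma firstOcc_sandwich_right {P Q : List ℕ} {c x : ℕ} (h : x ∉ P) (hxc : x ≠ c) :
    firstOcc (P ++ c :: Q) x = firstOcc (P ++ Q) x + 1 := by
  unfold firstOcc
  rw [List.idxOf_append_of_notMem h, List.idxOf_append_of_notMem h,
    List.idxOf_cons_ne _ (Ne.symm hxc)]
  omega

lemma secondOcc_sandwich_right {P Q : List ℕ} {c x : ℕ} (h : x ∈ Q) :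
    secondOcc (P ++ c :: Q) x = secondOcc (P ++ Q) x + 1 := by
  unfold secondOcc
  have h1 : (P ++ c :: Q).reverse = Q.reverse ++ c :: P.reverse := by simp
  have h2 : (P ++ Q).reverse = Q.reverse ++ P.reverse := by simp
  have hm : x ∈ Q.reverse := by simpa using h
  rw [h1, h2, List.idxOf_append_of_mem hm, List.idxOf_append_of_mem hm]
  have : Q.reverse.idxOf x < Q.length := by simpa using List.idxOf_lt_length_iff.2 hm
  simp only [List.length_append, List.length_cons]
  omega

lemma secondOcc_sandwich_left {P Q : List ℕ} {c x : ℕ} (hP : x ∈ P) (hQ : x ∉ Q)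
    (hxc : x ≠ c) : secondOcc (P ++ c :: Q) x = secondOcc (P ++ Q) x := by
  unfold secondOcc
  have h1 : (P ++ c :: Q).reverse = Q.reverse ++ c :: P.reverse := by simp
  have h2 : (P ++ Q).reverse = Q.reverse ++ P.reverse := by simp
  have hm : x ∉ Q.reverse := by simpa using hQ
  rw [h1, h2, List.idxOf_append_of_notMem hm, List.idxOf_append_of_notMem hm,
    List.idxOf_cons_ne _ (Ne.symm hxc)]
  have : P.reverse.idxOf x < P.length := by
    have := List.idxOf_lt_length_iff.2 (show x ∈ P.reverse by simpa using hP)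
    simpa using this
  simp only [List.length_append, List.length_cons, List.length_reverse]
  omega

lemma firstOcc_lt_secondOcc {l : List ℕ} {x : ℕ} (h : l.count x = 2) :
    firstOcc l x < secondOcc l x := by
  have hx : x ∈ l := List.count_pos_iff.1 (by omega)
  set p := firstOcc l x with hp
  have hpl : p < l.length := firstOcc_lt_length hx
  have hdec : l = l.take p ++ x :: l.drop (p + 1) := by
    conv_lhs => rw [← List.take_append_drop p l]
    rw [← List.getElem_cons_drop hpl, getElem_firstOcc hx]
  have hnx : x ∉ l.take p := fun hmem => absurd (firstOcc_lt_of_mem_take hmem) (lt_irrefl p)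
  have hcount : l.count x = (l.take p).count x + ((x :: l.drop (p+1)).count x) := by
    conv_lhs => rw [hdec]
    simp [List.count_append]
  rw [List.count_eq_zero_of_not_mem hnx, List.count_cons_self] at hcount
  have hmem : x ∈ l.drop (p + 1) := by
    apply List.count_pos_iff.1; omega
  have := le_secondOcc_of_mem_drop hmem
  omega

lemma insertIdx_length_append (P Q : List ℕ) (a : ℕ) :
    (P ++ Q).insertIdx P.length a = P ++ a :: Q := by
  induction P with
  | nil => simp
  | cons b P ih => simpa [List.insertIdx_succ_cons] using ih

lemma triangle_le_sum (T : Finset ℕ) : ∑ t ∈ Finset.range T.card, t ≤ ∑ x ∈ T, x := by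
  induction T using Finset.strongInduction with
  | _ T ih =>
    rcases T.eq_empty_or_nonempty with rfl | hT
    · simp
    · set m := T.max' hT with hm
      have hmT : m ∈ T := T.max'_mem hT
      have hcard : T.card ≤ m + 1 := by
        have : T ⊆ Finset.range (m + 1) := by
          intro x hx
          simp only [Finset.mem_range]
          have := Finset.le_max' T x hx
          omega
        simpa using Finset.card_le_card this
      have hc : T.card = (T.erase m).card + 1 := by
        rw [Finset.card_erase_of_mem hmT]
        have := Finset.card_pos.2 hT
        omega
      have ihm := ih (T.erase m) (Finset.erase_ssubset hmT)
      rw [hc, Finset.sum_range_succ, ← Finset.add_sum_erase T _ hmT]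
      have : (T.erase m).card ≤ m := by omega
      omega

lemma hop_main {n : ℕ} {v : List ℕ} (hv : IsTreeRep n v) {i k : ℕ}
    (hi2 : 2 ≤ i) (hin : i ≤ n) (hk1 : 1 ≤ k) (hkp : k < firstOcc v i) :
    IsTreeRep n ((v.erase i).insertIdx k i) ∧ IsHop n v ((v.erase i).insertIdx k i) ∧
      v.take k = ((v.erase i).insertIdx k i).take k ∧
      ((v.erase i).insertIdx k i).getD k 0 = i ∧ v.getD k 0 ≠ i := by
  obtain ⟨hlen, hmem, hcount, hhead, h5, h6⟩ := hv
  obtain ⟨p, hpdef⟩ : ∃ p, p = firstOcc v i := ⟨_, rfl⟩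
  rw [← hpdef] at hkp
  have hiv : i ∈ v := List.count_pos_iff.1 (by rw [hcount i (by omega) hin]; omega)
  have hpl : p < v.length := by rw [hpdef]; exact firstOcc_lt_length hiv
  set A := v.take p with hA
  set B := v.drop (p + 1) with hB
  have hvpD : v.getD p 0 = i := by
    rw [hpdef, List.getD_eq_getElem _ _ (firstOcc_lt_length hiv)]
    exact getElem_firstOcc hiv
  have hvp : v[p]'hpl = i := by rw [← List.getD_eq_getElem v 0 hpl]; exact hvpD
  have hdec : v = A ++ i :: B := by
    conv_lhs => rw [← List.take_append_drop p v]
    rw [← List.getElem_cons_drop hpl, hvp]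
  have hiA : i ∉ A := fun hm => by
    have := firstOcc_lt_of_mem_take hm
    omega
  have hAlen : A.length = p := by rw [hA, List.length_take]; omega
  have hu : v.erase i = A ++ B := by
    conv_lhs => rw [hdec]
    rw [List.erase_append_right _ hiA, List.erase_cons_head]
  set A1 := A.take k with hA1
  set A2 := A.drop k with hA2
  have hA1len : A1.length = k := by rw [hA1, List.length_take]; omega
  have hA12 : A = A1 ++ A2 := (List.take_append_drop k A).symm
  have hassoc : A ++ B = A1 ++ (A2 ++ B) := by rw [hA12, List.append_assoc]
  have hw : (v.erase i).insertIdx k i = A1 ++ i :: (A2 ++ B) := by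
    rw [hu, hassoc, ← hA1len, insertIdx_length_append]
  have htakeAB : (A ++ B).take k = A1 := by rw [hassoc, List.take_left' hA1len]
  have hdropAB : (A ++ B).drop k = A2 ++ B := by rw [hassoc, List.drop_left' hA1len]
  have hA1v : A1 = v.take k := by rw [hA1, hA, List.take_take]; congr 1; omega
  -- permutation
  have hperm : (A1 ++ i :: (A2 ++ B)).Perm v := by
    have h1 : (A1 ++ i :: (A2 ++ B)).Perm (i :: (A1 ++ (A2 ++ B))) := List.perm_middle
    rw [← hassoc] at h1
    have h2 : (A ++ i :: B).Perm (i :: (A ++ B)) := List.perm_middle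
    rw [hdec]
    exact h1.trans h2.symm
  -- membership transfer
  have hmemv : ∀ x : ℕ, x ∈ v → x ∈ A ++ B ∨ x = i := by
    intro x hx
    rw [hdec] at hx
    simp only [List.mem_append, List.mem_cons] at hx ⊢
    tauto
  -- first occurrence transport (x ≠ i)
  have hT1 : ∀ x, x ∈ v → x ≠ i → firstOcc (A1 ++ i :: (A2 ++ B)) x =
      (if firstOcc v x < k then firstOcc v x
        else if firstOcc v x < p then firstOcc v x + 1 else firstOcc v x) := by
    intro x hxv hxi
    have hxAB : x ∈ A ++ B := by rcases hmemv x hxv with h | h; exact h; exact absurd h hxi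
    by_cases hfp : firstOcc v x < p
    · have hxA : x ∈ A := mem_take_of_firstOcc_lt hxv hfp
      have e1 : firstOcc v x = firstOcc (A ++ B) x := by
        conv_lhs => rw [hdec]
        exact firstOcc_sandwich_left hxA
      by_cases hfk : firstOcc v x < k
      · have hxA1 : x ∈ A1 := by
          rw [← htakeAB]
          exact mem_take_of_firstOcc_lt hxAB (by omega)
        rw [firstOcc_sandwich_left hxA1, ← hassoc, ← e1]
        simp [hfk]
      · have hxA1 : x ∉ A1 := by
          intro hm
          have : x ∈ (A ++ B).take k := htakeAB ▸ hm
          have := firstOcc_lt_of_mem_take this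
          omega
        rw [firstOcc_sandwich_right hxA1 hxi, ← hassoc, ← e1]
        simp only [if_neg (by omega : ¬ firstOcc v x < k), if_pos hfp]
    · have hxA : x ∉ A := fun hm => hfp (firstOcc_lt_of_mem_take hm)
      have e1 : firstOcc v x = firstOcc (A ++ B) x + 1 := by
        conv_lhs => rw [hdec]
        exact firstOcc_sandwich_right hxA hxi
      have hxA1 : x ∉ A1 := by
        intro hm
        have : x ∈ (A ++ B).take k := htakeAB ▸ hm
        have := firstOcc_lt_of_mem_take this
        omega
      rw [firstOcc_sandwich_right hxA1 hxi, ← hassoc,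
        if_neg (by omega : ¬ firstOcc v x < k), if_neg hfp]
      omega
  have hT1i : firstOcc (A1 ++ i :: (A2 ++ B)) i = k := by
    have : i ∉ A1 := fun hm => hiA (List.mem_of_mem_take hm)
    rw [firstOcc_sandwich_self this, hA1len]
  have hsne' : ∀ x, x ∈ v → x ≠ i → secondOcc v x ≠ p := by
    intro x hxv hxi he
    have h1 : v.getD (secondOcc v x) 0 = x := by
      rw [List.getD_eq_getElem _ _ (secondOcc_lt_length hxv)]
      exact getElem_secondOcc hxv
    rw [he] at h1
    exact hxi (h1.symm.trans hvpD)
  have hSip : p < secondOcc v i := by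
    have := firstOcc_lt_secondOcc (hcount i (by omega) hin)
    omega
  -- second occurrence transport (all x ∈ v)
  have hT2 : ∀ x, x ∈ v → secondOcc (A1 ++ i :: (A2 ++ B)) x =
      (if secondOcc v x < k then secondOcc v x
        else if secondOcc v x < p then secondOcc v x + 1 else secondOcc v x) := by
    intro x hxv
    by_cases hsp : p < secondOcc v x
    · have hxB : x ∈ B := by
        rw [hB]
        exact mem_drop_of_le_secondOcc hxv (by omega)
      have e1 : secondOcc v x = secondOcc (A ++ B) x + 1 := by
        conv_lhs => rw [hdec]
        exact secondOcc_sandwich_right hxB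
      have hxA2B : x ∈ A2 ++ B := by simp [List.mem_append]; right; exact hxB
      rw [secondOcc_sandwich_right hxA2B, ← hassoc]
      simp only [if_neg (by omega : ¬ secondOcc v x < k), if_neg (by omega : ¬ secondOcc v x < p)]
      omega
    · -- here secondOcc v x < p (can't equal p), and x ≠ i
      have hxi : x ≠ i := by
        intro he
        subst he
        have := firstOcc_lt_secondOcc (hcount x (hmem x hxv).1 (hmem x hxv).2)
        omega
      have hsne : secondOcc v x ≠ p := by
        intro he
        have h1 : v.getD (secondOcc v x) 0 = x := by
          rw [List.getD_eq_getElem _ _ (secondOcc_lt_length hxv)]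
          exact getElem_secondOcc hxv
        have h2 : v.getD p 0 = i := by
          rw [hpdef, List.getD_eq_getElem _ _ (firstOcc_lt_length hiv)]
          exact getElem_firstOcc hiv
        rw [he] at h1
        exact hxi (h1.symm.trans h2)
      have hsp' : secondOcc v x < p := by omega
      have hxBn : x ∉ B := by
        intro hm
        have := le_secondOcc_of_mem_drop (hB ▸ hm)
        omega
      have hxA : x ∈ A := by
        have := hdec ▸ hxv
        simp only [List.mem_append, List.mem_cons] at this
        rcases this with h | h | h
        · exact h
        · exact absurd h hxi
        · exact absurd h hxBn
      have e1 : secondOcc v x = secondOcc (A ++ B) x := by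
        conv_lhs => rw [hdec]
        exact secondOcc_sandwich_left hxA hxBn hxi
      have hxAB : x ∈ A ++ B := by simp [List.mem_append]; left; exact hxA
      by_cases hsk : secondOcc v x < k
      · have hxA2Bn : x ∉ A2 ++ B := by
          intro hm
          have : x ∈ (A ++ B).drop k := hdropAB ▸ hm
          have := le_secondOcc_of_mem_drop this
          omega
        have hxA1 : x ∈ A1 := by
          have h' : x ∈ A1 ++ (A2 ++ B) := hassoc ▸ hxAB
          rcases List.mem_append.1 h' with h | h
          · exact h
          · exact absurd h hxA2Bn
        rw [secondOcc_sandwich_left hxA1 hxA2Bn hxi, ← hassoc, ← e1]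
        simp [hsk]
      · have hxA2B : x ∈ A2 ++ B := by
          rw [← hdropAB]
          exact mem_drop_of_le_secondOcc hxAB (by omega)
        rw [secondOcc_sandwich_right hxA2B, ← hassoc]
        simp only [if_neg hsk, if_pos hsp']
        omega
  -- i-1 facts
  have him : i - 1 ∈ v := List.count_pos_iff.1 (by rw [hcount (i-1) (by omega) (by omega)]; omega)
  have hSi1 : p < secondOcc v (i - 1) := by rw [hpdef]; exact h5 i hi2 hin
  have hhop : k ≤ secondOcc (v.erase i) (i - 1) := by
    have hxB : (i - 1) ∈ B := by
      rw [hB]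
      exact mem_drop_of_le_secondOcc him (by omega)
    have e1 : secondOcc v (i - 1) = secondOcc (A ++ B) (i - 1) + 1 := by
      conv_lhs => rw [hdec]
      exact secondOcc_sandwich_right hxB
    rw [hu]
    omega
  refine ⟨?_, ⟨i, k, hi2, hin, hk1, hhop, rfl⟩, ?_, ?_, ?_⟩
  · rw [hw]
    refine ⟨hperm.length_eq.trans hlen, ?_, ?_, ?_, ?_, ?_⟩
    · intro x hx; exact hmem x (hperm.mem_iff.1 hx)
    · intro j hj1 hjn; rw [hperm.count_eq]; exact hcount j hj1 hjn
    · rw [List.getD_eq_getElem?_getD, List.getElem?_append, if_pos (by omega : 0 < A1.length),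
        hA1v, List.getElem?_take, if_pos (by omega : 0 < k), ← List.getD_eq_getElem?_getD]
      exact hhead
    · intro j hj2 hjn
      have hjv : j ∈ v := List.count_pos_iff.1 (by rw [hcount j (by omega) hjn]; omega)
      have hj1v : j - 1 ∈ v :=
        List.count_pos_iff.1 (by rw [hcount (j-1) (by omega) (by omega)]; omega)
      have o5 := h5 j hj2 hjn
      have hq1 : secondOcc v (j - 1) ≠ p := by
        by_cases h : j - 1 = i
        · rw [h]; omega
        · exact hsne' _ hj1v h
      rw [hT2 (j - 1) hj1v]
      by_cases hji : j = i
      · subst hji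
        rw [hT1i]
        split_ifs <;> omega
      · rw [hT1 j hjv hji]
        split_ifs <;> omega
    · intro j hj2 hjn
      have hjv : j ∈ v := List.count_pos_iff.1 (by rw [hcount j (by omega) hjn]; omega)
      have hj1v : j - 1 ∈ v :=
        List.count_pos_iff.1 (by rw [hcount (j-1) (by omega) (by omega)]; omega)
      have o6 := h6 j hj2 hjn
      have hq1 : secondOcc v (j - 1) ≠ p := by
        by_cases h : j - 1 = i
        · rw [h]; omega
        · exact hsne' _ hj1v h
      have hq2 : secondOcc v j ≠ p := by
        by_cases h : j = i
        · rw [h]; omega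
        · exact hsne' _ hjv h
      rw [hT2 (j - 1) hj1v, hT2 j hjv]
      split_ifs <;> omega
  · rw [hw, List.take_left' hA1len, hA1v]
  · rw [hw, List.getD_eq_getElem?_getD, List.getElem?_append_right (by omega : A1.length ≤ k),
      hA1len, Nat.sub_self]
    simp
  · rw [List.getD_eq_getElem v 0 (by omega : k < v.length)]
    intro he
    have h1 := indexOf_le_of_getElem (by omega : k < v.length) he
    have h2 : firstOcc v i ≤ k := h1
    omega

/-- There exist constants `c₁, c₂ > 0` and `n₀` such that for every `n ≥ n₀`
and every tree representation `v` on `{1,…,n}`, the HOP neighbourhood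
`N(v) = {w ≠ v | w is a tree representation resulting from v by a single HOP}`
satisfies `c₁·n² ≤ |N(v)| ≤ c₂·n²`. -/
theorem stmt8 :
    ∃ c₁ c₂ : ℝ, 0 < c₁ ∧ 0 < c₂ ∧ ∃ n₀ : ℕ, ∀ n, n₀ ≤ n →
      ∀ v : List ℕ, IsTreeRep n v →
        c₁ * (n : ℝ) ^ 2 ≤ ({w | w ≠ v ∧ IsTreeRep n w ∧ IsHop n v w}.ncard : ℝ) ∧
        ({w | w ≠ v ∧ IsTreeRep n w ∧ IsHop n v w}.ncard : ℝ) ≤ c₂ * (n : ℝ) ^ 2 := by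
  refine ⟨1/8, 2, by norm_num, by norm_num, 4, ?_⟩
  intro n hn v hv
  set N := {w | w ≠ v ∧ IsTreeRep n w ∧ IsHop n v w} with hN
  set f : ℕ × ℕ → List ℕ := fun q => (v.erase q.1).insertIdx q.2 q.1 with hf
  -- upper bound
  have hsub : N ⊆ ↑((Finset.Icc 2 n ×ˢ Finset.Icc 1 (2*n)).image f) := by
    rintro w ⟨hne, htr, i, k, hi2, hin, hk1, hks, rfl⟩
    simp only [Finset.coe_image, Set.mem_image, Finset.mem_coe, Finset.mem_product,
      Finset.mem_Icc]
    refine ⟨(i, k), ⟨⟨hi2, hin⟩, hk1, ?_⟩, rfl⟩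
    have h1 : secondOcc (v.erase i) (i-1) ≤ (v.erase i).length := by
      unfold secondOcc; omega
    have h2 : (v.erase i).length ≤ v.length := (List.erase_sublist (a := i) (l := v)).length_le
    have h3 := hv.1
    omega
  have hfin : N.Finite := Set.Finite.subset (Finset.finite_toSet _) hsub
  have hub : N.ncard ≤ 2 * n ^ 2 := by
    calc N.ncard ≤ ((Finset.Icc 2 n ×ˢ Finset.Icc 1 (2*n)).image f : Finset (List ℕ)).card := by
          rw [← Set.ncard_coe_finset]
          exact Set.ncard_le_ncard hsub (Finset.finite_toSet _)
    _ ≤ (Finset.Icc 2 n ×ˢ Finset.Icc 1 (2*n)).card := Finset.card_image_le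
    _ = (n + 1 - 2) * (2 * n + 1 - 1) := by simp [Finset.card_product, Nat.card_Icc]
    _ ≤ 2 * n ^ 2 := by
        have e1 : n + 1 - 2 = n - 1 := by omega
        have e2 : 2 * n + 1 - 1 = 2 * n := by omega
        rw [e1, e2]
        calc (n - 1) * (2 * n) ≤ n * (2 * n) := Nat.mul_le_mul_right _ (Nat.sub_le n 1)
        _ = 2 * n ^ 2 := by ring
  -- lower bound
  set D : Finset (ℕ × ℕ) :=
    (Finset.Icc 2 n).biUnion (fun i => (Finset.Icc 1 (firstOcc v i - 1)).image fun k => (i, k))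
    with hD
  have hDmem : ∀ q ∈ D, 2 ≤ q.1 ∧ q.1 ≤ n ∧ 1 ≤ q.2 ∧ q.2 < firstOcc v q.1 := by
    intro q hq
    simp only [hD, Finset.mem_biUnion, Finset.mem_image, Finset.mem_Icc] at hq
    obtain ⟨i, hi, k, hk, rfl⟩ := hq
    exact ⟨hi.1, hi.2, hk.1, show k < firstOcc v i by omega⟩
  have hmain : ∀ q ∈ D, IsTreeRep n (f q) ∧ IsHop n v (f q) ∧
      v.take q.2 = (f q).take q.2 ∧ (f q).getD q.2 0 = q.1 ∧ v.getD q.2 0 ≠ q.1 := by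
    intro q hq
    obtain ⟨h1, h2, h3, h4⟩ := hDmem q hq
    exact hop_main hv h1 h2 h3 h4
  have hinj : Set.InjOn f ↑D := by
    intro q1 hq1 q2 hq2 heq
    obtain ⟨m11, m12, m13, m14, m15⟩ := hmain q1 (Finset.mem_coe.1 hq1)
    obtain ⟨m21, m22, m23, m24, m25⟩ := hmain q2 (Finset.mem_coe.1 hq2)
    have key : ∀ a b : ℕ × ℕ, f a = f b →
        v.take a.2 = (f a).take a.2 → (f a).getD a.2 0 = a.1 → v.getD a.2 0 ≠ a.1 →
        v.take b.2 = (f b).take b.2 → ¬ (a.2 < b.2) := by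
      intro a b hfab hta hga hva htb hlt
      apply hva
      have h1 : (f b).getD a.2 0 = v.getD a.2 0 := by
        rw [List.getD_eq_getElem?_getD, List.getD_eq_getElem?_getD]
        have e1 : (f b)[a.2]? = ((f b).take b.2)[a.2]? := by
          rw [List.getElem?_take, if_pos hlt]
        have e2 : v[a.2]? = (v.take b.2)[a.2]? := by
          rw [List.getElem?_take, if_pos hlt]
        rw [e1, e2, htb]
      rw [← h1, ← hfab, hga]
    have hk12 : q1.2 = q2.2 := by
      rcases lt_trichotomy q1.2 q2.2 with h | h | h
      · exact absurd h (key q1 q2 heq m13 m14 m15 m23)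
      · exact h
      · exact absurd h (key q2 q1 heq.symm m23 m24 m25 m13)
    have hi12 : q1.1 = q2.1 := by
      rw [← m14, heq, hk12, m24]
    exact Prod.ext hi12 hk12
  have hsub2 : ↑(D.image f) ⊆ N := by
    intro w hw
    simp only [Finset.coe_image, Set.mem_image, Finset.mem_coe] at hw
    obtain ⟨q, hq, rfl⟩ := hw
    obtain ⟨m1, m2, m3, m4, m5⟩ := hmain q hq
    refine ⟨fun he => m5 ?_, m1, m2⟩
    rw [← he]; exact m4
  have hlow1 : D.card ≤ N.ncard := by
    rw [← Finset.card_image_of_injOn hinj, ← Set.ncard_coe_finset]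
    exact Set.ncard_le_ncard hsub2 hfin
  have hDcard : D.card = ∑ i ∈ Finset.Icc 2 n, (firstOcc v i - 1) := by
    rw [hD, Finset.card_biUnion]
    · apply Finset.sum_congr rfl
      intro i _
      rw [Finset.card_image_of_injective _ (fun a b h => (Prod.ext_iff.1 h).2)]
      simp [Nat.card_Icc]
    · intro x hx y hy hxy
      simp only [Finset.disjoint_left, Finset.mem_image, Finset.mem_Icc]
      rintro a ⟨k, hk, rfl⟩ ⟨k', hk', he⟩
      exact hxy ((Prod.ext_iff.1 he).1).symm
  have hv0 : v.getD 0 0 = 1 := hv.2.2.2.1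
  have hvlen : v.length = 2 * n := hv.1
  have hfO1 : ∀ a, 2 ≤ a → a ≤ n → 1 ≤ firstOcc v a := by
    intro a ha2 han
    have hav : a ∈ v := List.count_pos_iff.1 (by rw [hv.2.2.1 a (by omega) han]; omega)
    by_contra h
    have h0 : firstOcc v a = 0 := by omega
    have h1 : v.getD (firstOcc v a) 0 = a := by
      rw [List.getD_eq_getElem _ _ (firstOcc_lt_length hav)]
      exact getElem_firstOcc hav
    rw [h0, hv0] at h1
    omega
  have hpinj : ∀ a ∈ Finset.Icc 2 n, ∀ b ∈ Finset.Icc 2 n,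
      firstOcc v a - 1 = firstOcc v b - 1 → a = b := by
    intro a ha b hb hab
    rw [Finset.mem_Icc] at ha hb
    have hav : a ∈ v := List.count_pos_iff.1 (by rw [hv.2.2.1 a (by omega) ha.2]; omega)
    have hbv : b ∈ v := List.count_pos_iff.1 (by rw [hv.2.2.1 b (by omega) hb.2]; omega)
    have h1 := hfO1 a ha.1 ha.2
    have h2 := hfO1 b hb.1 hb.2
    have he : firstOcc v a = firstOcc v b := by omega
    exact (List.idxOf_inj (y := b) hav).1 he
  have hsum : ∑ t ∈ Finset.range (n - 1), t ≤ ∑ i ∈ Finset.Icc 2 n, (firstOcc v i - 1) := by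
    have himg := triangle_le_sum ((Finset.Icc 2 n).image (fun i => firstOcc v i - 1))
    rw [Finset.sum_image hpinj, Finset.card_image_of_injOn
      (fun a ha b hb h => hpinj a (Finset.mem_coe.1 ha) b (Finset.mem_coe.1 hb) h)] at himg
    have hc : (Finset.Icc 2 n).card = n - 1 := by
      rw [Nat.card_Icc]; omega
    rw [hc] at himg
    exact himg
  have hncard : ∑ t ∈ Finset.range (n - 1), t ≤ N.ncard := le_trans hsum (hDcard ▸ hlow1)
  have h2t : (∑ t ∈ Finset.range (n - 1), t) * 2 = (n - 1) * (n - 2) := by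
    rw [Finset.sum_range_id_mul_two, Nat.sub_sub]
  have h8 : n ^ 2 ≤ 8 * N.ncard := by
    obtain ⟨m, rfl⟩ : ∃ m, n = m + 4 := ⟨n - 4, by omega⟩
    have e1 : m + 4 - 1 = m + 3 := by omega
    have e2 : m + 4 - 2 = m + 2 := by omega
    rw [e1, e2] at h2t
    rw [e1] at hncard
    nlinarith [hncard, h2t]
  constructor
  · have hc : ((n : ℝ)) ^ 2 ≤ 8 * (N.ncard : ℝ) := by exact_mod_cast h8
    linarith
  · have hc : (N.ncard : ℝ) ≤ 2 * (n : ℝ) ^ 2 := by exact_mod_cast hub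
    linarith
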